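/- If G is a regular distribution function, then for every γ ∈ (0,1) there exists a nondecreasing sequence (v_n) of reals such that G(v_n)^n → γ as n → ∞. -/

import Mathlib

open MeasureTheory Filter Topology Set

noncomputable section

/-- Event that the partial maximum `max_{0 ≤ j ≤ n-1} X_j` is at most `x`
(empty maximum interpreted as `-∞`, so the event is everything for `n = 0`). -/
def maxEvent {Ω : Type*} (X : ℕ → Ω → ℝ) (n : ℕ) (x : ℝ) : Set Ω :=
  {ω | ∀ j < n, X j ω ≤ x}

/-- `G` is a distribution function: nondecreasing, right-continuous, with limits
`0` at `-∞` and `1` at `+∞`. -/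
def IsDistFun (G : ℝ → ℝ) : Prop :=
  Monotone G ∧ (∀ x, ContinuousWithinAt G (Set.Ici x) x) ∧
    Tendsto G atBot (nhds 0) ∧ Tendsto G atTop (nhds 1)

/-- `G` is a phantom distribution function for `X` under `P`:
`sup_x |P(M_n ≤ x) - G(x)^n| → 0`. -/
def IsPhantom {Ω : Type*} [MeasurableSpace Ω] (P : Measure Ω) (X : ℕ → Ω → ℝ)
    (G : ℝ → ℝ) : Prop :=
  Tendsto (fun n => ⨆ x : ℝ, |(P (maxEvent X n x)).toReal - G x ^ n|) atTop (nhds 0)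

/-- The right end `G_* = sup {x : G x < 1}`, as an extended real. -/
def GstarE (G : ℝ → ℝ) : EReal := sSup ((fun x : ℝ => (x : EReal)) '' {x | G x < 1})

/-- The filter of real numbers approaching `c ∈ (-∞, +∞]` strictly from the left
(equals `atTop` when `c = ⊤`). -/
def leftFilter (c : EReal) : Filter ℝ :=
  Filter.comap (fun x : ℝ => (x : EReal)) (nhdsWithin c (Set.Iio c))

/-- Regularity in the sense of O'Brien: `G(G_*-) = 1` and
`(1 - G(x-))/(1 - G(x)) → 1` as `x → G_*-`. -/
def IsRegularDF (G : ℝ → ℝ) : Prop :=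
  Tendsto G (leftFilter (GstarE G)) (nhds 1) ∧
    Tendsto (fun x => (1 - Function.leftLim G x) / (1 - G x))
      (leftFilter (GstarE G)) (nhds 1)

theorem regular_levels_for_all_gamma (G : ℝ → ℝ) (hG : IsDistFun G)
    (hreg : IsRegularDF G) :
    ∀ γ ∈ Set.Ioo (0 : ℝ) 1, ∃ v : ℕ → ℝ, Monotone v ∧
      Tendsto (fun n => G (v n) ^ n) atTop (nhds γ) := by
  rintro γ ⟨hγ0, hγ1⟩
  obtain ⟨hmono, hrc, hbotG, htopG⟩ := hG
  -- basic bounds on G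
  have h0G : ∀ x, 0 ≤ G x := fun x =>
    le_of_tendsto hbotG ((eventually_le_atBot x).mono fun y hy => hmono hy)
  have hG1' : ∀ x, G x ≤ 1 := fun x =>
    ge_of_tendsto htopG ((eventually_ge_atTop x).mono fun y hy => hmono hy)
  set c := GstarE G with hc
  -- the threshold sequence t n = γ ^ (1 / max n 1)
  set t : ℕ → ℝ := fun n => γ ^ (((max n 1 : ℕ) : ℝ))⁻¹ with ht
  have hmax_pos : ∀ n : ℕ, (0:ℝ) < ((max n 1 : ℕ) : ℝ) := fun n => by
    have : (1:ℕ) ≤ max n 1 := le_max_right _ _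
    exact_mod_cast Nat.lt_of_lt_of_le Nat.zero_lt_one this
  have ht_pos : ∀ n, 0 < t n := fun n => Real.rpow_pos_of_pos hγ0 _
  have ht_lt1 : ∀ n, t n < 1 := fun n =>
    Real.rpow_lt_one hγ0.le hγ1 (inv_pos.2 (hmax_pos n))
  have ht_mono : Monotone t := by
    intro m n hmn
    apply Real.rpow_le_rpow_of_exponent_ge hγ0 hγ1.le
    apply inv_anti₀ (hmax_pos m)
    exact_mod_cast Nat.cast_le.2 (max_le_max hmn le_rfl)
  have ht_lim : Tendsto t atTop (𝓝 1) := by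
    have h1 : Tendsto (fun n : ℕ => ((max n 1 : ℕ) : ℝ)) atTop atTop := by
      apply tendsto_natCast_atTop_atTop.comp
      exact tendsto_atTop_mono (fun n => le_max_left n 1) tendsto_id
    have h2 : Tendsto (fun n : ℕ => (((max n 1 : ℕ) : ℝ))⁻¹) atTop (𝓝 0) :=
      tendsto_inv_atTop_zero.comp h1
    have h3 : ContinuousAt (fun x : ℝ => γ ^ x) 0 :=
      Real.continuousAt_const_rpow hγ0.ne'
    have h4 := h3.tendsto.comp h2
    rw [Real.rpow_zero] at h4
    exact h4
  -- nonemptiness of {x | G x < 1}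
  have hA : ∃ x, G x < 1 := (hbotG.eventually_lt_const one_pos).exists
  have hRle : ∀ x : ℝ, G x < 1 → (x : EReal) ≤ c := fun x h =>
    le_sSup ⟨x, h, rfl⟩
  have hlt : ∀ x : ℝ, (x : EReal) < c → G x < 1 := by
    intro x hx
    obtain ⟨b, ⟨a, ha, rfl⟩, hab⟩ := lt_sSup_iff.1 hx
    exact lt_of_le_of_lt (hmono (EReal.coe_lt_coe_iff.1 hab).le) ha
  have hbot_lt_c : (⊥ : EReal) < c := by
    obtain ⟨x0, hx0⟩ := hA
    exact lt_of_lt_of_le (EReal.bot_lt_coe x0) (hRle x0 hx0)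
  -- the left filter is nontrivial
  have hne : (leftFilter c).NeBot := by
    apply Filter.comap_neBot
    intro s hs
    obtain ⟨l, hl, hsub⟩ := (mem_nhdsLT_iff_exists_Ioo_subset' hbot_lt_c).1 hs
    obtain ⟨r, hlr, hrc⟩ := EReal.lt_iff_exists_real_btwn.1 hl
    exact ⟨r, hsub ⟨hlr, hrc⟩⟩
  have hev_lt : ∀ᶠ x : ℝ in leftFilter c, (x : EReal) < c := by
    have h1 : (fun x : ℝ => (x : EReal)) ⁻¹' (Set.Iio c) ∈ leftFilter c :=
      Filter.preimage_mem_comap self_mem_nhdsWithin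
    exact h1
  -- the sets S n and the levels v n
  set S : ℕ → Set ℝ := fun n => {x | t n ≤ G x} with hS
  have hS_ne_lt : ∀ n, ∃ x, x ∈ S n ∧ (x : EReal) < c := by
    intro n
    have h1 : ∀ᶠ x in leftFilter c, t n < G x :=
      hreg.1.eventually_const_lt (ht_lt1 n)
    obtain ⟨x, hx1, hx2⟩ := (h1.and hev_lt).exists
    exact ⟨x, hx1.le, hx2⟩
  have hS_ne : ∀ n, (S n).Nonempty := fun n => ⟨(hS_ne_lt n).choose, (hS_ne_lt n).choose_spec.1⟩
  have hS_bdd : ∀ n, BddBelow (S n) := by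
    intro n
    obtain ⟨x0, hx0⟩ := (hbotG.eventually_lt_const (ht_pos n)).exists
    refine ⟨x0, fun y hy => ?_⟩
    by_contra h
    push_neg at h
    exact absurd (le_trans hy (hmono h.le)) (not_le.2 hx0)
  set v : ℕ → ℝ := fun n => sInf (S n) with hv
  have hv_le : ∀ n, ∀ x ∈ S n, v n ≤ x := fun n x hx => csInf_le (hS_bdd n) hx
  have hGv : ∀ n, t n ≤ G (v n) := by
    intro n
    have hcl : v n ∈ closure (S n) := csInf_mem_closure (hS_ne n) (hS_bdd n)
    have hnb : (𝓝[S n] (v n)).NeBot := mem_closure_iff_nhdsWithin_neBot.1 hcl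
    have hsub : S n ⊆ Set.Ici (v n) := fun x hx => hv_le n x hx
    have hten : Tendsto G (𝓝[S n] (v n)) (𝓝 (G (v n))) :=
      (hrc (v n)).mono_left (nhdsWithin_mono _ hsub)
    exact ge_of_tendsto hten (eventually_mem_nhdsWithin.mono fun y hy => hy)
  have hv_lt_c : ∀ n, ((v n : ℝ) : EReal) < c := by
    intro n
    obtain ⟨x, hx1, hx2⟩ := hS_ne_lt n
    exact lt_of_le_of_lt (EReal.coe_le_coe_iff.2 (hv_le n x hx1)) hx2
  have hGv_lt1 : ∀ n, G (v n) < 1 := fun n => hlt _ (hv_lt_c n)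
  have hleftLim_le : ∀ n, Function.leftLim G (v n) ≤ t n := by
    intro n
    apply le_of_tendsto (hmono.tendsto_leftLim (v n))
    filter_upwards [self_mem_nhdsWithin] with y hy
    by_contra h
    push_neg at h
    exact absurd (hv_le n y h.le) (not_le.2 hy)
  have hleft_nonneg : ∀ n, 0 ≤ Function.leftLim G (v n) := fun n =>
    (h0G (v n - 1)).trans (hmono.le_leftLim (by linarith))
  have hleft_le_G : ∀ n, Function.leftLim G (v n) ≤ G (v n) := fun n =>
    hmono.leftLim_le le_rfl
  have hv_mono : Monotone v := by
    intro m n hmn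
    exact le_csInf (hS_ne n) fun x hx => csInf_le (hS_bdd m) ((ht_mono hmn).trans hx)
  -- v n → G_* from the left
  have h_tends : Tendsto v atTop (leftFilter c) := by
    rw [leftFilter, tendsto_comap_iff]
    rw [tendsto_nhdsWithin_iff]
    constructor
    · rw [tendsto_order]
      constructor
      · intro b hb
        obtain ⟨r, hbr, hrc⟩ := EReal.lt_iff_exists_real_btwn.1 hb
        have hGr : G r < 1 := hlt r hrc
        filter_upwards [ht_lim.eventually_const_lt hGr] with n hn
        have hrv : r ≤ v n := by
          apply le_csInf (hS_ne n)
          intro y hy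
          by_contra h
          push_neg at h
          exact absurd (le_trans hy (hmono h.le)) (not_le.2 hn)
        exact lt_of_lt_of_le hbr (EReal.coe_le_coe_iff.2 hrv)
      · intro b hb
        filter_upwards with n
        exact lt_trans (hv_lt_c n) hb
    · filter_upwards with n
      exact hv_lt_c n
  have hGlim : Tendsto (fun n => G (v n)) atTop (𝓝 1) := hreg.1.comp h_tends
  have hratio : Tendsto (fun n => (1 - Function.leftLim G (v n)) / (1 - G (v n)))
      atTop (𝓝 1) := hreg.2.comp h_tends
  -- notation for the tails
  set a : ℕ → ℝ := fun n => 1 - G (v n) with ha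
  set b : ℕ → ℝ := fun n => 1 - Function.leftLim G (v n) with hb
  have ha_pos : ∀ n, 0 < a n := fun n => by simp only [ha]; linarith [hGv_lt1 n]
  have hab : ∀ n, a n ≤ b n := fun n => by simp only [ha, hb]; linarith [hleft_le_G n]
  have hb_le1 : ∀ n, b n ≤ 1 := fun n => by simp only [hb]; linarith [hleft_nonneg n]
  have ha0 : Tendsto a atTop (𝓝 0) := by
    have h1 : Tendsto (fun _ : ℕ => (1:ℝ)) atTop (𝓝 1) := tendsto_const_nhds
    have := h1.sub hGlim
    simpa using this
  have hb0 : Tendsto b atTop (𝓝 0) := by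
    have h1 : Tendsto (fun n => b n / a n * a n) atTop (𝓝 0) := by
      have := hratio.mul ha0
      simpa using this
    apply h1.congr
    intro n
    exact div_mul_cancel₀ (b n) (ha_pos n).ne'
  -- t n ^ n = γ for n ≥ 1
  have htpow : ∀ n : ℕ, 1 ≤ n → t n ^ n = γ := by
    intro n hn
    have hmax : max n 1 = n := max_eq_left hn
    have hn0 : ((n:ℝ)) ≠ 0 := Nat.cast_ne_zero.2 (by omega)
    rw [ht]
    simp only [hmax]
    rw [← Real.rpow_natCast (γ ^ (((n:ℕ):ℝ))⁻¹) n, ← Real.rpow_mul hγ0.le,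
      inv_mul_cancel₀ hn0, Real.rpow_one]
  -- lower bound : γ ≤ G(v n)^n for n ≥ 1
  have hlow : ∀ n : ℕ, 1 ≤ n → γ ≤ G (v n) ^ n := by
    intro n hn
    calc γ = t n ^ n := (htpow n hn).symm
    _ ≤ G (v n) ^ n := pow_le_pow_left₀ (ht_pos n).le (hGv n) n
  -- n * a n is bounded by -log γ for n ≥ 1
  have hna : ∀ n : ℕ, 1 ≤ n → (n : ℝ) * a n ≤ -Real.log γ := by
    intro n hn
    have h1 : γ ≤ Real.exp ((n : ℝ) * (-(a n))) := by
      calc γ ≤ G (v n) ^ n := hlow n hn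
      _ = (1 - a n) ^ n := by simp [ha]
      _ ≤ Real.exp (-(a n)) ^ n := by
          apply pow_le_pow_left₀ (by simp only [ha]; linarith [h0G (v n)])
          linarith [Real.add_one_le_exp (-(a n))]
      _ = Real.exp ((n : ℝ) * (-(a n))) := (Real.exp_nat_mul _ n).symm
    have := (Real.log_le_iff_le_exp hγ0).2 h1
    nlinarith [this]
  -- the error term
  set ε : ℕ → ℝ := fun n => (n : ℝ) * ((b n - a n) / (1 - b n)) with hε
  have hδ : Tendsto (fun n => (b n / a n - 1) / (1 - b n)) atTop (𝓝 0) := by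
    have h1 : Tendsto (fun n => b n / a n - 1) atTop (𝓝 0) := by
      have := hratio.sub_const 1
      simpa [ha, hb] using this
    have h2 : Tendsto (fun n => 1 - b n) atTop (𝓝 1) := by
      have h1' : Tendsto (fun _ : ℕ => (1:ℝ)) atTop (𝓝 1) := tendsto_const_nhds
      have := h1'.sub hb0
      simpa using this
    have := h1.div h2 one_ne_zero
    simpa [Pi.div_def] using this
  have hε0 : Tendsto ε atTop (𝓝 0) := by
    apply squeeze_zero_norm' (a := fun n => (-Real.log γ) * |(b n / a n - 1) / (1 - b n)|)
    · filter_upwards [eventually_ge_atTop 1] with n hn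
      have ha' : a n ≠ 0 := (ha_pos n).ne'
      have key : ε n = ((n : ℝ) * a n) * ((b n / a n - 1) / (1 - b n)) := by
        by_cases hbn : (1:ℝ) - b n = 0
        · simp [hε, hbn]
        · rw [hε]
          field_simp
      rw [key]
      rw [norm_mul]
      apply mul_le_mul_of_nonneg_right _ (norm_nonneg _)
      rw [Real.norm_eq_abs, abs_of_nonneg (mul_nonneg (Nat.cast_nonneg n) (ha_pos n).le)]
      exact hna n hn
    · have := hδ.abs.const_mul (-Real.log γ)
      simpa using this
  -- upper bound : G(v n)^n ≤ γ * exp (ε n) eventually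
  have hupper : ∀ᶠ n in atTop, G (v n) ^ n ≤ γ * Real.exp (ε n) := by
    filter_upwards [eventually_ge_atTop 1, hb0.eventually_lt_const one_pos] with n hn hbn
    have hBpos : 0 < 1 - b n := by linarith
    have hBA : 1 - b n ≤ 1 - a n := by linarith [hab n]
    have hBn : (1 - b n) ^ n ≤ γ := by
      calc (1 - b n) ^ n ≤ t n ^ n := by
              apply pow_le_pow_left₀ hBpos.le
              simpa [hb] using hleftLim_le n
      _ = γ := htpow n hn
    have hABn : ((1 - a n) / (1 - b n)) ^ n ≤ Real.exp (ε n) := by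
      calc ((1 - a n) / (1 - b n)) ^ n ≤ Real.exp ((b n - a n) / (1 - b n)) ^ n := by
            apply pow_le_pow_left₀ (div_nonneg (by simp only [ha]; linarith [h0G (v n)]) hBpos.le)
            have h1 : (1 - a n) / (1 - b n) - 1 = (b n - a n) / (1 - b n) := by
              field_simp
              ring
            linarith [Real.add_one_le_exp ((b n - a n) / (1 - b n)), h1]
      _ = Real.exp (ε n) := by rw [← Real.exp_nat_mul]
    calc G (v n) ^ n = (1 - a n) ^ n := by simp [ha]
    _ = ((1 - b n) * ((1 - a n) / (1 - b n))) ^ n := by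
        rw [mul_div_cancel₀ _ hBpos.ne']
    _ = (1 - b n) ^ n * ((1 - a n) / (1 - b n)) ^ n := mul_pow _ _ _
    _ ≤ γ * Real.exp (ε n) := by
        apply mul_le_mul hBn hABn
          (pow_nonneg (div_nonneg (by simp only [ha]; linarith [h0G (v n)]) hBpos.le) n) hγ0.le
  -- conclusion by squeezing
  refine ⟨v, hv_mono, ?_⟩
  have hupper_lim : Tendsto (fun n => γ * Real.exp (ε n)) atTop (𝓝 γ) := by
    have h1 := (Real.continuous_exp.tendsto 0).comp hε0
    have hγc : Tendsto (fun _ : ℕ => γ) atTop (𝓝 γ) := tendsto_const_nhds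
    have h2 := hγc.mul h1
    simpa using h2
  apply tendsto_of_tendsto_of_tendsto_of_le_of_le' tendsto_const_nhds hupper_lim
  · filter_upwards [eventually_ge_atTop 1] with n hn
    exact hlow n hn
  · exact hupper
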